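/- Let a be a nonzero real number, b a real number, and u the 2×2 real matrix [[−a, b], [0, 0]] (which satisfies u² = −a·u). Then the convergent matrix power series representing (e^{u/2} − e^{−u/2})/u, namely S := Σ_{n=0}^∞ (1 / (4ⁿ · (2n+1)!)) · u^{2n} (with u⁰ = I), has determinant det(S) = sinh(a/2) / (a/2). This is the ghost-free gauge invariant symmetric measure factor |j₀(u)| appearing in the regularised BRST group averaging formula, and for u built from the structure functions of case (ii) (a = λ²κg(x), b = κg(x)λ¹) it equals sinh(λ²κg(x)/2) / (λ²κg(x)/2). -/

import Mathlib

open Matrix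

/-- The ghost-free gauge invariant symmetric measure factor of the regularised BRST group
averaging formula: for `u = [[−a, b],[0,0]]` (so `u² = −a·u`), the convergent power
series `S = Σ_{n≥0} u^{2n}/(4ⁿ(2n+1)!)` representing `(e^{u/2} − e^{−u/2})/u` has
determinant `|j₀(u)| = det S = sinh(a/2)/(a/2)`. -/
theorem brst_symmetric_measure_factor
    (a b : ℝ) (ha : a ≠ 0)
    (u : Matrix (Fin 2) (Fin 2) ℝ) (hu : u = !![-a, b; 0, 0]) :
    u ^ 2 = -a • u ∧
      Matrix.det
          (∑' n : ℕ, ((1 : ℝ) / (4 ^ n * Nat.factorial (2 * n + 1))) • u ^ (2 * n))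
        = Real.sinh (a / 2) / (a / 2) := by
  have hsq : u ^ 2 = -a • u := by
    subst hu
    rw [pow_two]
    ext i j
    fin_cases i <;> fin_cases j <;>
      simp [Matrix.mul_apply, Fin.sum_univ_succ] <;> ring
  refine ⟨hsq, ?_⟩
  have hpow : ∀ m : ℕ, u ^ (2 * (m + 1)) = ((-a) ^ (2 * m + 1)) • u := by
    intro m
    induction m with
    | zero => simpa using hsq
    | succ k ih =>
        have h2 : 2 * (k + 1 + 1) = 2 * (k + 1) + 2 := by ring
        calc u ^ (2 * (k + 1 + 1)) = u ^ (2 * (k + 1)) * u ^ 2 := by rw [h2, pow_add]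
          _ = ((-a) ^ (2 * k + 1)) • u * (-a) • u := by rw [ih, hsq]
          _ = ((-a) ^ (2 * k + 1) * -a) • (u * u) := by
                rw [smul_mul_assoc, mul_smul_comm, smul_smul]
          _ = ((-a) ^ (2 * k + 1) * -a) • ((-a) • u) := by rw [← pow_two, hsq]
          _ = ((-a) ^ (2 * (k + 1) + 1)) • u := by rw [smul_smul]; congr 1
  set d : ℕ → ℝ := fun n =>
    -(1 / (a * (a / 2))) * ((a / 2) ^ (2 * n + 1) / (Nat.factorial (2 * n + 1))) +
      (if n = 0 then 1 / a else 0) with hd_def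
  have hF : ∀ n : ℕ,
      ((1 : ℝ) / (4 ^ n * Nat.factorial (2 * n + 1))) • u ^ (2 * n)
        = (if n = 0 then (1 : ℝ) else 0) • (1 : Matrix (Fin 2) (Fin 2) ℝ) + d n • u := by
    intro n
    cases n with
    | zero =>
        have hd0 : d 0 = 0 := by
          simp only [hd_def, ↓reduceIte]
          field_simp
          ring
        simp [hd0]
    | succ m =>
        rw [hpow m, smul_smul]
        have hK : (Nat.factorial (2 * (m + 1) + 1) : ℝ) ≠ 0 := by
          exact_mod_cast Nat.factorial_ne_zero _
        have hodd : ((-a : ℝ)) ^ (2 * m + 1) = -(a ^ (2 * m + 1)) :=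
          Odd.neg_pow ⟨m, by ring⟩ a
        have hs : (1 : ℝ) / (4 ^ (m + 1) * Nat.factorial (2 * (m + 1) + 1)) * (-a) ^ (2 * m + 1)
            = d (m + 1) := by
          simp only [hd_def, if_neg (Nat.succ_ne_zero m), add_zero]
          rw [hodd, div_pow]
          have h4 : (4 : ℝ) ^ (m + 1) = 2 ^ (2 * (m + 1)) := by
            rw [pow_mul]; norm_num
          rw [h4]
          field_simp
          ring
        rw [hs]
        simp
  -- the sums of the scalar coefficient sequences
  have hc : HasSum (fun n : ℕ => if n = 0 then (1 : ℝ) else 0) 1 := by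
    simpa using hasSum_ite_eq (0 : ℕ) (1 : ℝ)
  have hd2 : HasSum (fun n : ℕ => if n = 0 then (1 / a : ℝ) else 0) (1 / a) := by
    simpa using hasSum_ite_eq (0 : ℕ) (1 / a : ℝ)
  have hd1 : HasSum
      (fun n : ℕ => -(1 / (a * (a / 2))) * ((a / 2) ^ (2 * n + 1) / (Nat.factorial (2 * n + 1))))
      (-(1 / (a * (a / 2))) * Real.sinh (a / 2)) :=
    (Real.hasSum_sinh (a / 2)).mul_left _
  have hd : HasSum d (-(1 / (a * (a / 2))) * Real.sinh (a / 2) + 1 / a) := hd1.add hd2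
  set D : ℝ := -(1 / (a * (a / 2))) * Real.sinh (a / 2) + 1 / a with hD_def
  have hsum : HasSum (fun n : ℕ => ((1 : ℝ) / (4 ^ n * Nat.factorial (2 * n + 1))) • u ^ (2 * n))
      ((1 : Matrix (Fin 2) (Fin 2) ℝ) + D • u) := by
    have h1 := (hc.smul_const (1 : Matrix (Fin 2) (Fin 2) ℝ)).add (hd.smul_const u)
    rw [one_smul] at h1
    simp only [hF]
    exact h1
  have htsum : (∑' n : ℕ, ((1 : ℝ) / (4 ^ n * Nat.factorial (2 * n + 1))) • u ^ (2 * n))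
      = (1 : Matrix (Fin 2) (Fin 2) ℝ) + D • u := hsum.tsum_eq
  rw [htsum, hu]
  have hmat : (1 : Matrix (Fin 2) (Fin 2) ℝ) + D • !![-a, b; 0, 0]
      = !![1 - D * a, D * b; 0, 1] := by
    ext i j
    fin_cases i <;> fin_cases j <;> simp [Matrix.one_apply] <;> ring
  rw [hmat, Matrix.det_fin_two_of]
  rw [hD_def]
  field_simp
  ring
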